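/- Let h = p + q ∈ GL_n(R) be R-Θ-semisimple with skew part p and symmetric part q, and let G^{h,Θ}(R) = {g ∈ GL_n(R) : ᵗg h g = h}. Then G^{h,Θ}(R) is isomorphic to O(q_+,R) × (Sp(p_- ⊕ p_0, R) ∩ O(q_- ⊕ q_0, R)), where the subscripts refer to the restrictions to the summands M_+, M_-, M_0 of the canonical decomposition of R^n; moreover every g ∈ G^{h,Θ}(R) preserves this decomposition. -/

import Mathlib

open Matrix

/-- `R` is either a field of characteristic `0`, or the ring of integers of a `p`-adic
field with odd residue characteristic. -/
def IsPaperRing (R : Type*) [CommRing R] [IsDomain R] [IsLocalRing R] : Prop :=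
  (IsField R ∧ CharZero R) ∨
  (IsDiscreteValuationRing R ∧ IsAdicComplete (IsLocalRing.maximalIdeal R) R ∧
    Finite (IsLocalRing.ResidueField R) ∧ ringChar (IsLocalRing.ResidueField R) ≠ 2)

/-- A matrix `g` is `R`-semisimple. -/
def IsRSemisimpleMatrix (R : Type*) [CommRing R] [IsLocalRing R] {n : ℕ}
    (g : Matrix (Fin n) (Fin n) R) : Prop :=
  (IsField R ∧ Module.End.IsSemisimple (Matrix.toLin' g)) ∨
  (∃ k : ℕ, 0 < k ∧ Nat.Coprime k (ringChar (IsLocalRing.ResidueField R)) ∧ g ^ k = 1)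

section TCaux

open Polynomial

lemma TC.mulVec_dot {R : Type*} [CommRing R] {n : ℕ} (M : Matrix (Fin n) (Fin n) R)
    (x w : Fin n → R) : (M *ᵥ x) ⬝ᵥ w = x ⬝ᵥ (Mᵀ *ᵥ w) := by
  rw [Matrix.dotProduct_mulVec, Matrix.vecMul_transpose]

lemma TC.split_vec {R : Type*} [CommRing R] {n : ℕ} (u : Matrix (Fin n) (Fin n) R)
    {c d : R[X]} (hcd : IsCoprime c d) (v : Fin n → R)
    (hv : (aeval u (c * d)) *ᵥ v = 0) :
    ∃ x y, (aeval u c) *ᵥ x = 0 ∧ (aeval u d) *ᵥ y = 0 ∧ v = x + y := by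
  obtain ⟨a, b, hab⟩ := hcd
  refine ⟨(aeval u (b * d)) *ᵥ v, (aeval u (a * c)) *ᵥ v, ?_, ?_, ?_⟩
  · rw [Matrix.mulVec_mulVec, ← _root_.map_mul, show c * (b * d) = b * (c * d) by ring,
      _root_.map_mul, ← Matrix.mulVec_mulVec, hv, Matrix.mulVec_zero]
  · rw [Matrix.mulVec_mulVec, ← _root_.map_mul, show d * (a * c) = a * (c * d) by ring,
      _root_.map_mul, ← Matrix.mulVec_mulVec, hv, Matrix.mulVec_zero]
  · rw [← Matrix.add_mulVec, ← _root_.map_add, show b * d + a * c = a * c + b * d by ring, hab,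
      _root_.map_one, Matrix.one_mulVec]

lemma TC.isCoprime_X_sub_C {R : Type*} [CommRing R] (a : R) (f : R[X])
    (hf : IsUnit (f.eval a)) : IsCoprime (X - C a) f := by
  obtain ⟨s, hs⟩ := X_sub_C_dvd_sub_C_eval (a := a) (p := f)
  obtain ⟨e, he⟩ := hf.exists_left_inv
  have he' : C e * C (f.eval a) = 1 := by rw [← C_mul, he, C_1]
  exact ⟨-(C e * s), C e, by linear_combination (C e) * hs + he'⟩

lemma TC.dot_aeval {R : Type*} [CommRing R] {n : ℕ} {u A : Matrix (Fin n) (Fin n) R}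
    (hA : ∀ x y, (u *ᵥ x) ⬝ᵥ (A *ᵥ (u *ᵥ y)) = x ⬝ᵥ (A *ᵥ y))
    {c : R} (hc : c * c = 1) {m : Fin n → R} (hm : u *ᵥ m = c • m) (f : R[X]) (z : Fin n → R) :
    m ⬝ᵥ (A *ᵥ ((aeval u f) *ᵥ z)) = f.eval c * (m ⬝ᵥ (A *ᵥ z)) := by
  have hstep : ∀ z, m ⬝ᵥ (A *ᵥ (u *ᵥ z)) = c * (m ⬝ᵥ (A *ᵥ z)) := by
    intro z
    have hmm : m = c • (u *ᵥ m) := by rw [hm, smul_smul, hc, one_smul]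
    calc m ⬝ᵥ (A *ᵥ (u *ᵥ z)) = (c • (u *ᵥ m)) ⬝ᵥ (A *ᵥ (u *ᵥ z)) := by rw [← hmm]
    _ = c * ((u *ᵥ m) ⬝ᵥ (A *ᵥ (u *ᵥ z))) := by rw [smul_dotProduct]; rfl
    _ = c * (m ⬝ᵥ (A *ᵥ z)) := by rw [hA]
  have hpow : ∀ j z, m ⬝ᵥ (A *ᵥ ((u ^ j) *ᵥ z)) = c ^ j * (m ⬝ᵥ (A *ᵥ z)) := by
    intro j
    induction j with
    | zero => intro z; simp
    | succ j ih =>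
      intro z
      rw [pow_succ, ← Matrix.mulVec_mulVec, ih, hstep, pow_succ]; ring
  induction f using Polynomial.induction_on' with
  | add p q hp hq =>
    rw [_root_.map_add, Matrix.add_mulVec, Matrix.mulVec_add, dotProduct_add, hp, hq,
      eval_add]; ring
  | monomial j a =>
    rw [aeval_monomial, eval_monomial]
    have : (algebraMap R (Matrix (Fin n) (Fin n) R)) a * u ^ j = a • u ^ j := by
      rw [Algebra.algebraMap_eq_smul_one, smul_mul_assoc, one_mul]
    rw [this, Matrix.smul_mulVec, Matrix.mulVec_smul, dotProduct_smul, hpow,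
      smul_eq_mul]; ring

lemma TC.isUnit_of_residue_ne_zero {R : Type*} [CommRing R] [IsLocalRing R] {x : R}
    (hx : IsLocalRing.residue R x ≠ 0) : IsUnit x := by
  by_contra hu
  exact hx (Ideal.Quotient.eq_zero_iff_mem.mpr
    ((IsLocalRing.mem_maximalIdeal x).mpr (mem_nonunits_iff.mpr hu)))

lemma TC.isUnit_natCast {R : Type*} [CommRing R] [IsLocalRing R] {k : ℕ}
    (hco : Nat.Coprime k (ringChar (IsLocalRing.ResidueField R))) : IsUnit (k : R) := by
  rcases eq_or_ne (ringChar (IsLocalRing.ResidueField R)) 0 with h0 | h0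
  · rw [h0, Nat.coprime_zero_right] at hco
    simp [hco]
  · apply TC.isUnit_of_residue_ne_zero
    have hmc : (IsLocalRing.residue R) (k : R) = (k : IsLocalRing.ResidueField R) :=
      map_natCast _ k
    rw [hmc]
    intro hk
    have hdvd : ringChar (IsLocalRing.ResidueField R) ∣ k := ringChar.dvd hk
    have h1 : ringChar (IsLocalRing.ResidueField R) ∣ 1 := hco ▸ Nat.dvd_gcd hdvd dvd_rfl
    exact (@CharP.char_ne_one (IsLocalRing.ResidueField R) _ _ _
      (ringChar.charP _)) (Nat.dvd_one.mp h1)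

lemma TC.isUnit_two {R : Type*} [CommRing R] [IsDomain R] [IsLocalRing R]
    (hR : IsPaperRing R) : IsUnit (2 : R) := by
  rcases hR with ⟨hf, hc⟩ | ⟨_, _, _, hchar⟩
  · have h2 : (2 : R) ≠ 0 := by
      have h2' : ((2 : ℕ) : R) ≠ 0 := Nat.cast_ne_zero.mpr (by norm_num)
      exact_mod_cast h2'
    obtain ⟨b, hb⟩ := hf.mul_inv_cancel h2
    exact IsUnit.of_mul_eq_one _ hb
  · apply TC.isUnit_of_residue_ne_zero
    have hmc : (IsLocalRing.residue R) (2 : R) = (2 : IsLocalRing.ResidueField R) := by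
      have := map_natCast (IsLocalRing.residue R) 2
      simpa using this
    rw [hmc]
    intro h2
    have hd : ringChar (IsLocalRing.ResidueField R) ∣ 2 := ringChar.dvd (by exact_mod_cast h2)
    rcases (Nat.dvd_prime Nat.prime_two).mp hd with h1 | h1
    · exact (@CharP.char_ne_one (IsLocalRing.ResidueField R) _ _ _ (ringChar.charP _)) h1
    · exact hchar h1

end TCaux

/-- Structure of the twisted centralizer `G^{h,Θ}(R) = {g : ᵗg h g = h}` of an
`R`-Θ-semisimple `h = p + q`: every such `g` preserves the decomposition
`Rⁿ = M₊ ⊕ M₋ ⊕ M₀`, and restriction gives a group isomorphism (expressed below as an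
injective and surjective multiplicativity-preserving restriction correspondence) of
`G^{h,Θ}(R)` with `O(q₊, R) × (Sp(p₋ ⊕ p₀, R) ∩ O(q₋ ⊕ q₀, R))`, where the second factor
acts on `W = M₋ ⊕ M₀`. -/
theorem twisted_centralizer_structure
    {R : Type*} [CommRing R] [IsDomain R] [IsLocalRing R] (hR : IsPaperRing R)
    {n : ℕ} (h pm qm : Matrix (Fin n) (Fin n) R) (hinv : IsUnit h)
    (hss : IsRSemisimpleMatrix R ((hᵀ)⁻¹ * h))
    (hsum : h = pm + qm) (hskew : pmᵀ = -pm) (hsymm : qmᵀ = qm) :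
    ∀ (Bh Bp Bq : (Fin n → R) →ₗ[R] (Fin n → R) →ₗ[R] R),
      Bh = Matrix.toLinearMap₂' R h → Bp = Matrix.toLinearMap₂' R pm →
      Bq = Matrix.toLinearMap₂' R qm →
    ∀ (Mplus Mminus M0 W : Submodule R (Fin n → R)),
      Mplus = LinearMap.ker (Matrix.toLin' pm) →
      Mminus = LinearMap.ker (Matrix.toLin' qm) →
      M0 = (Mplus.orthogonalBilin Bq) ⊓ (Mminus.orthogonalBilin Bp) →
      W = Mminus ⊔ M0 →
      -- every element of `G^{h,Θ}(R)` preserves the decomposition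
      ((∀ g : (Fin n → R) ≃ₗ[R] (Fin n → R), (∀ x y, Bh (g x) (g y) = Bh x y) →
        (∀ x ∈ Mplus, g x ∈ Mplus) ∧ (∀ x ∈ Mminus, g x ∈ Mminus) ∧
        (∀ x ∈ M0, g x ∈ M0)) ∧
      -- the restriction map `g ↦ (g|M₊, g|W)` is injective …
      (∀ g g' : (Fin n → R) ≃ₗ[R] (Fin n → R),
        (∀ x y, Bh (g x) (g y) = Bh x y) → (∀ x y, Bh (g' x) (g' y) = Bh x y) →
        (∀ x ∈ Mplus, g x = g' x) → (∀ x ∈ W, g x = g' x) → g = g') ∧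
      -- … and surjective onto `O(q₊) × (Sp(p₋ ⊕ p₀) ∩ O(q₋ ⊕ q₀))`
      (∀ a : Mplus ≃ₗ[R] Mplus, (∀ x y : Mplus, Bq (a x) (a y) = Bq x y) →
        ∀ c : W ≃ₗ[R] W, (∀ x y : W, Bp (c x) (c y) = Bp x y) →
          (∀ x y : W, Bq (c x) (c y) = Bq x y) →
          ∃ g : (Fin n → R) ≃ₗ[R] (Fin n → R), (∀ x y, Bh (g x) (g y) = Bh x y) ∧
            (∀ x : Mplus, g x = a x) ∧ (∀ x : W, g x = c x))) := by
  intro Bh Bp Bq hBh hBp hBq Mplus Mminus M0 W hMp hMm hM0 hW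
  subst hBh hBp hBq
  classical
  -- units and basic matrix facts
  have hv2 : IsUnit (2 : R) := TC.isUnit_two hR
  have hdet : IsUnit h.det := (Matrix.isUnit_iff_isUnit_det h).mp hinv
  have hdetT : IsUnit hᵀ.det := by rwa [Matrix.det_transpose]
  have hTmul : hᵀ * (hᵀ)⁻¹ = 1 := Matrix.mul_nonsing_inv _ hdetT
  have hTmul' : (hᵀ)⁻¹ * hᵀ = 1 := Matrix.nonsing_inv_mul _ hdetT
  have hmul : h * h⁻¹ = 1 := Matrix.mul_nonsing_inv _ hdet
  have hmul' : h⁻¹ * h = 1 := Matrix.nonsing_inv_mul _ hdet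
  set u : Matrix (Fin n) (Fin n) R := (hᵀ)⁻¹ * h with hu_def
  have hTu : hᵀ * u = h := by
    rw [hu_def, ← Matrix.mul_assoc, hTmul, Matrix.one_mul]
  have hT : hᵀ = qm - pm := by
    rw [hsum, Matrix.transpose_add, hskew, hsymm]; abel
  have hhq : h + hᵀ = qm + qm := by rw [hT, hsum]; abel
  have hhp : h - hᵀ = pm + pm := by rw [hT, hsum]; abel
  have h2pm : hᵀ * (u - 1) = pm + pm := by
    rw [mul_sub, hTu, mul_one, ← hhp]
  have h2qm : hᵀ * (u + 1) = qm + qm := by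
    rw [mul_add, hTu, mul_one, ← hhq]
  have hut : uᵀ = hᵀ * h⁻¹ := by
    rw [hu_def, Matrix.transpose_mul, Matrix.transpose_nonsing_inv, Matrix.transpose_transpose]
  have hiso_h : uᵀ * h * u = h := by
    rw [hut, mul_assoc (hᵀ) (h⁻¹) h, hmul', mul_one, hTu]
  have hiso_hT : uᵀ * hᵀ * u = hᵀ := by
    rw [hut, hu_def]
    calc hᵀ * h⁻¹ * hᵀ * ((hᵀ)⁻¹ * h) = hᵀ * h⁻¹ * (hᵀ * (hᵀ)⁻¹) * h := by
          simp only [mul_assoc]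
    _ = hᵀ := by rw [hTmul, mul_one, mul_assoc, hmul', mul_one]
  -- cancellation of 2
  have htwo : ∀ a b : R, a + a = b + b → a = b := by
    intro a b hab
    have := hv2.smul_left_cancel (x := a) (y := b)
    apply this.mp
    rw [two_smul, two_smul]; exact hab
  have htwoM : ∀ A B : Matrix (Fin n) (Fin n) R, A + A = B + B → A = B := by
    intro A B hAB
    ext i j
    exact htwo _ _ (by have := congrFun (congrFun hAB i) j; simpa using this)
  -- isometry identities for pm and qm
  have hisoq : uᵀ * qm * u = qm := by
    apply htwoM
    calc uᵀ * qm * u + uᵀ * qm * u = uᵀ * (qm + qm) * u := by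
          rw [mul_add, add_mul]
    _ = uᵀ * (h + hᵀ) * u := by rw [hhq]
    _ = h + hᵀ := by rw [mul_add, add_mul, hiso_h, hiso_hT]
    _ = qm + qm := hhq
  have hisop : uᵀ * pm * u = pm := by
    apply htwoM
    calc uᵀ * pm * u + uᵀ * pm * u = uᵀ * (pm + pm) * u := by
          rw [mul_add, add_mul]
    _ = uᵀ * (h - hᵀ) * u := by rw [hhp]
    _ = h - hᵀ := by rw [mul_sub, sub_mul, hiso_h, hiso_hT]
    _ = pm + pm := hhp
  -- vector-level isometries
  have hdotA : ∀ A : Matrix (Fin n) (Fin n) R, uᵀ * A * u = A →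
      ∀ x y, (u *ᵥ x) ⬝ᵥ (A *ᵥ (u *ᵥ y)) = x ⬝ᵥ (A *ᵥ y) := by
    intro A hA x y
    calc (u *ᵥ x) ⬝ᵥ (A *ᵥ (u *ᵥ y)) = x ⬝ᵥ (uᵀ *ᵥ (A *ᵥ (u *ᵥ y))) := TC.mulVec_dot u x _
    _ = x ⬝ᵥ ((uᵀ * A * u) *ᵥ y) := by rw [Matrix.mulVec_mulVec, Matrix.mulVec_mulVec,
          mul_assoc]
    _ = x ⬝ᵥ (A *ᵥ y) := by rw [hA]
  have hdq := hdotA qm hisoq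
  have hdp := hdotA pm hisop
  -- injectivity of invertible matrices on vectors
  have hkerT : ∀ v : Fin n → R, hᵀ *ᵥ v = 0 → v = 0 := by
    intro v hv
    calc v = ((hᵀ)⁻¹ * hᵀ) *ᵥ v := by rw [hTmul', Matrix.one_mulVec]
    _ = (hᵀ)⁻¹ *ᵥ (hᵀ *ᵥ v) := (Matrix.mulVec_mulVec _ _ _).symm
    _ = 0 := by rw [hv, Matrix.mulVec_zero]
  have hkerh : ∀ v : Fin n → R, h *ᵥ v = 0 → v = 0 := by
    intro v hv
    calc v = (h⁻¹ * h) *ᵥ v := by rw [hmul', Matrix.one_mulVec]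
    _ = h⁻¹ *ᵥ (h *ᵥ v) := (Matrix.mulVec_mulVec _ _ _).symm
    _ = 0 := by rw [hv, Matrix.mulVec_zero]
  -- kernel characterizations
  have hvtwo : ∀ w : Fin n → R, w + w = 0 → w = 0 := by
    intro w hw
    funext i
    exact htwo _ _ (by have := congrFun hw i; simpa using this)
  have memp' : ∀ x, pm *ᵥ x = 0 ↔ u *ᵥ x = x := by
    intro x
    constructor
    · intro hx
      have h1 : hᵀ *ᵥ ((u - 1) *ᵥ x) = 0 := by
        rw [Matrix.mulVec_mulVec, h2pm, Matrix.add_mulVec, hx, add_zero]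
      have h2 := hkerT _ h1
      rw [Matrix.sub_mulVec, Matrix.one_mulVec, sub_eq_zero] at h2
      exact h2
    · intro hx
      apply hvtwo
      have h1 : (pm + pm) *ᵥ x = 0 := by
        rw [← h2pm, ← Matrix.mulVec_mulVec, Matrix.sub_mulVec, Matrix.one_mulVec, hx,
          sub_self, Matrix.mulVec_zero]
      rw [Matrix.add_mulVec] at h1
      exact h1
  have memq' : ∀ x, qm *ᵥ x = 0 ↔ u *ᵥ x = -x := by
    intro x
    constructor
    · intro hx
      have h1 : hᵀ *ᵥ ((u + 1) *ᵥ x) = 0 := by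
        rw [Matrix.mulVec_mulVec, h2qm, Matrix.add_mulVec, hx, add_zero]
      have h2 := hkerT _ h1
      rw [Matrix.add_mulVec, Matrix.one_mulVec, add_eq_zero_iff_eq_neg] at h2
      exact h2
    · intro hx
      apply hvtwo
      have h1 : (qm + qm) *ᵥ x = 0 := by
        rw [← h2qm, ← Matrix.mulVec_mulVec, Matrix.add_mulVec, Matrix.one_mulVec, hx,
          neg_add_cancel, Matrix.mulVec_zero]
      rw [Matrix.add_mulVec] at h1
      exact h1
  -- non-degeneracy of the dot product
  have hdot0 : ∀ w : Fin n → R, (∀ v, v ⬝ᵥ w = 0) → w = 0 := by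
    intro w hw
    funext i
    have := hw (Pi.single i 1)
    rwa [single_dotProduct, one_mul] at this
  -- symmetry of Bq, antisymmetry of Bp
  have hqsymm : ∀ x y, x ⬝ᵥ (qm *ᵥ y) = y ⬝ᵥ (qm *ᵥ x) := by
    intro x y
    rw [dotProduct_comm y, TC.mulVec_dot, hsymm]
  have hpskew : ∀ x y, x ⬝ᵥ (pm *ᵥ y) = -(y ⬝ᵥ (pm *ᵥ x)) := by
    intro x y
    rw [dotProduct_comm y, TC.mulVec_dot, hskew, Matrix.neg_mulVec,
      dotProduct_neg, neg_neg]
  -- membership characterizations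
  have memMp : ∀ x, x ∈ Mplus ↔ pm *ᵥ x = 0 := by
    intro x; rw [hMp, LinearMap.mem_ker, Matrix.toLin'_apply]
  have memMm : ∀ x, x ∈ Mminus ↔ qm *ᵥ x = 0 := by
    intro x; rw [hMm, LinearMap.mem_ker, Matrix.toLin'_apply]
  have memM0 : ∀ z, z ∈ M0 ↔ (∀ m, pm *ᵥ m = 0 → m ⬝ᵥ (qm *ᵥ z) = 0) ∧
      (∀ m, qm *ᵥ m = 0 → m ⬝ᵥ (pm *ᵥ z) = 0) := by
    intro z
    rw [hM0, Submodule.mem_inf, Submodule.mem_orthogonalBilin_iff,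
      Submodule.mem_orthogonalBilin_iff]
    constructor
    · rintro ⟨h1, h2⟩
      constructor
      · intro m hm
        have := h1 m ((memMp m).mpr hm)
        rwa [Matrix.toLinearMap₂'_apply'] at this
      · intro m hm
        have := h2 m ((memMm m).mpr hm)
        rwa [Matrix.toLinearMap₂'_apply'] at this
    · rintro ⟨h1, h2⟩
      constructor
      · intro m hm
        rw [Matrix.toLinearMap₂'_apply']
        exact h1 m ((memMp m).mp hm)
      · intro m hm
        rw [Matrix.toLinearMap₂'_apply']
        exact h2 m ((memMm m).mp hm)
  -- the key polynomial package coming from Θ-semisimplicity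
  have hpack : ∃ r : Polynomial R,
      (Polynomial.aeval u) ((Polynomial.X - Polynomial.C (1:R)) *
        ((Polynomial.X - Polynomial.C (-1:R)) * r)) = 0 ∧
      IsUnit (r.eval 1) ∧ IsUnit (r.eval (-1)) := by
    rcases hss with ⟨hfield, hssend⟩ | ⟨k, hk, hco, hpow⟩
    · -- field, semisimple case
      letI : Field R := hfield.toField
      have hInt : IsIntegral R u := Algebra.IsIntegral.isIntegral u
      have hmu0 : (Polynomial.aeval u) (minpoly R u) = 0 := minpoly.aeval R u
      have hsq : Squarefree (minpoly R u) := by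
        have h1 := Module.End.IsSemisimple.minpoly_squarefree hssend
        rwa [show Matrix.toLin' u = Matrix.toLinAlgEquiv' u from rfl,
          minpoly.algEquiv_eq] at h1
      set d2 : Polynomial R := (Polynomial.X - Polynomial.C (1:R)) *
        (Polynomial.X - Polynomial.C (-1:R)) with hd2
      obtain ⟨r, hr⟩ := EuclideanDomain.gcd_dvd_left (minpoly R u) d2
      obtain ⟨t, ht⟩ := EuclideanDomain.gcd_dvd_right (minpoly R u) d2
      set g0 := EuclideanDomain.gcd (minpoly R u) d2 with hg0
      have hkill : ∀ a : R, r.eval a = 0 → (Polynomial.X - Polynomial.C a) ∣ d2 → False := by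
        intro a ha had
        have hdvd : (Polynomial.X - Polynomial.C a) ∣ r := Polynomial.dvd_iff_isRoot.mpr ha
        obtain ⟨s, hs⟩ := hdvd
        have hdm : (Polynomial.X - Polynomial.C a) ∣ minpoly R u :=
          ⟨g0 * s, by rw [hr, hs]; ring⟩
        have hdg : (Polynomial.X - Polynomial.C a) ∣ g0 := EuclideanDomain.dvd_gcd hdm had
        have hsqd : (Polynomial.X - Polynomial.C a) * (Polynomial.X - Polynomial.C a) ∣
            minpoly R u := by rw [hr]; exact mul_dvd_mul hdg ⟨s, hs⟩
        exact Polynomial.not_isUnit_X_sub_C _ (hsq _ hsqd)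
      refine ⟨r, ?_, ?_, ?_⟩
      · have heq : (Polynomial.X - Polynomial.C (1:R)) *
            ((Polynomial.X - Polynomial.C (-1:R)) * r) = t * minpoly R u := by
          calc (Polynomial.X - Polynomial.C (1:R)) *
              ((Polynomial.X - Polynomial.C (-1:R)) * r) = d2 * r := by rw [hd2]; ring
          _ = (g0 * t) * r := by rw [← ht]
          _ = t * (g0 * r) := by ring
          _ = t * minpoly R u := by rw [← hr]
        rw [heq, _root_.map_mul, hmu0, mul_zero]
      · refine isUnit_iff_ne_zero.mpr fun h10 => hkill 1 h10 ?_
        exact hd2 ▸ dvd_mul_right _ _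
      · refine isUnit_iff_ne_zero.mpr fun h10 => hkill (-1) h10 ?_
        exact hd2 ▸ dvd_mul_left _ _
    · -- finite order case
      set r : Polynomial R := ∑ i ∈ Finset.range k, (Polynomial.X ^ 2) ^ i with hrdef
      have hre : ∀ c : R, c * c = 1 → r.eval c = (k : R) := by
        intro c hc
        rw [hrdef, Polynomial.eval_finset_sum]
        have hone : ∀ i ∈ Finset.range k, ((Polynomial.X ^ 2) ^ i).eval c = 1 := by
          intro i _
          rw [Polynomial.eval_pow, Polynomial.eval_pow, Polynomial.eval_X,
            show c ^ 2 = 1 by rw [sq, hc], one_pow]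
        rw [Finset.sum_congr rfl hone, Finset.sum_const, Finset.card_range, nsmul_eq_mul,
          mul_one]
      have hk1 : IsUnit ((k : R)) := TC.isUnit_natCast hco
      refine ⟨r, ?_, by rw [hre 1 (by ring)]; exact hk1, by rw [hre (-1) (by ring)]; exact hk1⟩
      have heq : (Polynomial.X - Polynomial.C (1:R)) *
          ((Polynomial.X - Polynomial.C (-1:R)) * r) = (Polynomial.X ^ 2) ^ k - 1 := by
        have hg := geom_sum_mul (Polynomial.X ^ 2 : Polynomial R) k
        calc (Polynomial.X - Polynomial.C (1:R)) * ((Polynomial.X - Polynomial.C (-1:R)) * r)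
            = r * (Polynomial.X ^ 2 - 1) := by
              simp only [map_neg, Polynomial.C_1]; ring
        _ = (Polynomial.X ^ 2) ^ k - 1 := by rw [← hg, hrdef]
      rw [heq, _root_.map_sub, _root_.map_one, _root_.map_pow, _root_.map_pow,
        Polynomial.aeval_X]
      have hu2k : (u ^ 2) ^ k = 1 := by rw [← pow_mul, mul_comm, pow_mul, hpow, one_pow]
      rw [hu2k, sub_self]
  obtain ⟨r, haev, hr1, hrm1⟩ := hpack
  have hco1 : IsCoprime (Polynomial.X - Polynomial.C (1:R))
      ((Polynomial.X - Polynomial.C (-1:R)) * r) := by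
    apply TC.isCoprime_X_sub_C
    rw [Polynomial.eval_mul, Polynomial.eval_sub, Polynomial.eval_X, Polynomial.eval_C,
      show (1:R) - (-1) = 2 by ring]
    exact hv2.mul hr1
  have hco2 : IsCoprime (Polynomial.X - Polynomial.C (-1:R)) r :=
    TC.isCoprime_X_sub_C _ _ hrm1
  have hdecomp : ∀ v : Fin n → R, ∃ x y z, pm *ᵥ x = 0 ∧ qm *ᵥ y = 0 ∧
      (Polynomial.aeval u r) *ᵥ z = 0 ∧ v = x + y + z := by
    intro v
    obtain ⟨x, w, hx, hw, hv⟩ := TC.split_vec u hco1 v (by rw [haev, Matrix.zero_mulVec])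
    obtain ⟨y, z, hy, hz, hw'⟩ := TC.split_vec u hco2 w hw
    refine ⟨x, y, z, ?_, ?_, hz, by rw [hv, hw', add_assoc]⟩
    · apply (memp' x).mpr
      have he : Polynomial.aeval u (Polynomial.X - Polynomial.C (1:R)) = u - 1 := by
        rw [_root_.map_sub, Polynomial.aeval_X, Polynomial.aeval_C, _root_.map_one]
      rw [he, Matrix.sub_mulVec, Matrix.one_mulVec, sub_eq_zero] at hx
      exact hx
    · apply (memq' y).mpr
      have he : Polynomial.aeval u (Polynomial.X - Polynomial.C (-1:R)) = u + 1 := by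
        simp [sub_neg_eq_add]
      rw [he, Matrix.add_mulVec, Matrix.one_mulVec, add_eq_zero_iff_eq_neg] at hy
      exact hy
  have hzM0 : ∀ z, (Polynomial.aeval u r) *ᵥ z = 0 → z ∈ M0 := by
    intro z hz
    refine (memM0 z).mpr ⟨?_, ?_⟩
    · intro m hm
      have h1 := TC.dot_aeval hdq (show (1:R) * 1 = 1 by ring)
        (show u *ᵥ m = (1:R) • m by rw [(memp' m).mp hm, one_smul]) r z
      rw [hz, Matrix.mulVec_zero, dotProduct_zero] at h1
      exact (hr1.mul_right_eq_zero).mp h1.symm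
    · intro m hm
      have h1 := TC.dot_aeval hdp (show (-1:R) * (-1) = 1 by ring)
        (show u *ᵥ m = (-1:R) • m by rw [(memq' m).mp hm, neg_one_smul]) r z
      rw [hz, Matrix.mulVec_zero, dotProduct_zero] at h1
      exact (hrm1.mul_right_eq_zero).mp h1.symm
  have hsuptop : ∀ v : Fin n → R, ∃ x ∈ Mplus, ∃ w ∈ W, v = x + w := by
    intro v
    obtain ⟨x, y, z, hx, hy, hz, hv⟩ := hdecomp v
    refine ⟨x, (memMp x).mpr hx, y + z, ?_, by rw [hv, add_assoc]⟩
    rw [hW]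
    exact Submodule.add_mem_sup ((memMm y).mpr hy) (hzM0 z hz)
  have horthq : ∀ x w, x ∈ Mplus → w ∈ W → x ⬝ᵥ (qm *ᵥ w) = 0 := by
    intro x w hx hw
    rw [hW] at hw
    obtain ⟨y, hy, z, hz, hwy⟩ := Submodule.mem_sup.mp hw
    rw [← hwy, Matrix.mulVec_add, dotProduct_add, (memMm y).mp hy,
      dotProduct_zero, zero_add]
    exact ((memM0 z).mp hz).1 x ((memMp x).mp hx)
  have horthp : ∀ x w, pm *ᵥ x = 0 → x ⬝ᵥ (pm *ᵥ w) = 0 := by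
    intro x w hx
    rw [hpskew, hx, dotProduct_zero, neg_zero]
  have hdisj : ∀ x, x ∈ Mplus → x ∈ W → x = 0 := by
    intro x hxp hxw
    have hpx : pm *ᵥ x = 0 := (memMp x).mp hxp
    apply hkerh
    apply hdot0
    intro v
    obtain ⟨xv, hxv, wv, hwv, hv⟩ := hsuptop v
    have e0 : h *ᵥ x = pm *ᵥ x + qm *ᵥ x := by rw [hsum, Matrix.add_mulVec]
    rw [hv, add_dotProduct, e0]
    have e1 : xv ⬝ᵥ (pm *ᵥ x + qm *ᵥ x) = 0 := by
      rw [dotProduct_add, hpx, dotProduct_zero, zero_add]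
      exact horthq xv x hxv hxw
    have e2 : wv ⬝ᵥ (pm *ᵥ x + qm *ᵥ x) = 0 := by
      rw [dotProduct_add, hpx, dotProduct_zero, zero_add, hqsymm]
      exact horthq x wv hxp hwv
    rw [e1, e2, add_zero]
  refine ⟨?_, ?_, ?_⟩
  · -- part 1 : preservation of the decomposition
    intro g hg
    have hg' : ∀ x y, (g x) ⬝ᵥ (h *ᵥ (g y)) = x ⬝ᵥ (h *ᵥ y) := by
      intro x y
      have h1 := hg x y
      rwa [Matrix.toLinearMap₂'_apply', Matrix.toLinearMap₂'_apply'] at h1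
    have hswap : ∀ (a b : Fin n → R), a ⬝ᵥ (hᵀ *ᵥ b) = b ⬝ᵥ (h *ᵥ a) := by
      intro a b
      rw [← TC.mulVec_dot, dotProduct_comm]
    have hgT : ∀ x y, (g x) ⬝ᵥ (hᵀ *ᵥ (g y)) = x ⬝ᵥ (hᵀ *ᵥ y) := by
      intro x y
      rw [hswap, hswap x, hg']
    have hgq : ∀ x y, (g x) ⬝ᵥ (qm *ᵥ (g y)) = x ⬝ᵥ (qm *ᵥ y) := by
      intro x y
      apply htwo
      have eL : ∀ (a b : Fin n → R), a ⬝ᵥ (qm *ᵥ b) + a ⬝ᵥ (qm *ᵥ b) =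
          a ⬝ᵥ (h *ᵥ b) + a ⬝ᵥ (hᵀ *ᵥ b) := by
        intro a b
        rw [← dotProduct_add, ← dotProduct_add, ← Matrix.add_mulVec,
          ← Matrix.add_mulVec, hhq]
      rw [eL, eL, hg', hgT]
    have hgp : ∀ x y, (g x) ⬝ᵥ (pm *ᵥ (g y)) = x ⬝ᵥ (pm *ᵥ y) := by
      intro x y
      apply htwo
      have eL : ∀ (a b : Fin n → R), a ⬝ᵥ (pm *ᵥ b) + a ⬝ᵥ (pm *ᵥ b) =
          a ⬝ᵥ (h *ᵥ b) - a ⬝ᵥ (hᵀ *ᵥ b) := by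
        intro a b
        rw [← dotProduct_sub, ← Matrix.sub_mulVec, hhp, Matrix.add_mulVec,
          dotProduct_add]
      rw [eL, eL, hg', hgT]
    have hpres : ∀ (g' : (Fin n → R) ≃ₗ[R] (Fin n → R)) (A : Matrix (Fin n) (Fin n) R),
        (∀ x y, (g' x) ⬝ᵥ (A *ᵥ (g' y)) = x ⬝ᵥ (A *ᵥ y)) →
        ∀ x, A *ᵥ x = 0 → A *ᵥ (g' x) = 0 := by
      intro g' A hgA x hx
      apply hdot0
      intro v
      calc v ⬝ᵥ (A *ᵥ (g' x)) = (g' (g'.symm v)) ⬝ᵥ (A *ᵥ (g' x)) := by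
            rw [g'.apply_symm_apply]
      _ = (g'.symm v) ⬝ᵥ (A *ᵥ x) := hgA _ x
      _ = 0 := by rw [hx, dotProduct_zero]
    have hgq_symm : ∀ x y, (g.symm x) ⬝ᵥ (qm *ᵥ (g.symm y)) = x ⬝ᵥ (qm *ᵥ y) := by
      intro x y
      conv_rhs => rw [← g.apply_symm_apply x, ← g.apply_symm_apply y]
      rw [hgq]
    have hgp_symm : ∀ x y, (g.symm x) ⬝ᵥ (pm *ᵥ (g.symm y)) = x ⬝ᵥ (pm *ᵥ y) := by
      intro x y
      conv_rhs => rw [← g.apply_symm_apply x, ← g.apply_symm_apply y]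
      rw [hgp]
    refine ⟨?_, ?_, ?_⟩
    · intro x hx
      exact (memMp _).mpr (hpres g pm hgp x ((memMp x).mp hx))
    · intro x hx
      exact (memMm _).mpr (hpres g qm hgq x ((memMm x).mp hx))
    · intro x hx
      obtain ⟨hx1, hx2⟩ := (memM0 x).mp hx
      refine (memM0 _).mpr ⟨?_, ?_⟩
      · intro m hm
        calc m ⬝ᵥ (qm *ᵥ (g x)) = (g (g.symm m)) ⬝ᵥ (qm *ᵥ (g x)) := by
              rw [g.apply_symm_apply]
        _ = (g.symm m) ⬝ᵥ (qm *ᵥ x) := hgq _ _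
        _ = 0 := hx1 _ (hpres g.symm pm hgp_symm m hm)
      · intro m hm
        calc m ⬝ᵥ (pm *ᵥ (g x)) = (g (g.symm m)) ⬝ᵥ (pm *ᵥ (g x)) := by
              rw [g.apply_symm_apply]
        _ = (g.symm m) ⬝ᵥ (pm *ᵥ x) := hgp _ _
        _ = 0 := hx2 _ (hpres g.symm qm hgq_symm m hm)
  · -- part 2 : injectivity of restriction
    intro g g' _ _ hagree1 hagree2
    apply LinearEquiv.toLinearMap_injective
    apply LinearMap.ext
    intro v
    obtain ⟨x, hx, w, hw, hv⟩ := hsuptop v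
    simp only [LinearEquiv.coe_coe]
    rw [hv, map_add, map_add, hagree1 x hx, hagree2 w hw]
  · -- part 3 : surjectivity
    intro a ha c hc hcq
    have hcompl : IsCompl Mplus W := by
      constructor
      · rw [disjoint_iff]
        apply (Submodule.eq_bot_iff _).mpr
        intro x hx
        exact hdisj x (Submodule.mem_inf.mp hx).1 (Submodule.mem_inf.mp hx).2
      · rw [codisjoint_iff]
        apply Submodule.eq_top_iff'.mpr
        intro v
        obtain ⟨x, hx, w, hw, hv⟩ := hsuptop v
        exact hv ▸ Submodule.add_mem_sup hx hw
    set E := Submodule.prodEquivOfIsCompl Mplus W hcompl with hE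
    refine ⟨E.symm.trans ((a.prodCongr c).trans E), ?_, ?_, ?_⟩
    case refine_2 =>
      intro x
      simp only [LinearEquiv.trans_apply]
      rw [hE, Submodule.prodEquivOfIsCompl_symm_apply_left, LinearEquiv.prodCongr_apply]
      simp [Submodule.coe_prodEquivOfIsCompl']
    case refine_3 =>
      intro w
      simp only [LinearEquiv.trans_apply]
      rw [hE, Submodule.prodEquivOfIsCompl_symm_apply_right, LinearEquiv.prodCongr_apply]
      simp [Submodule.coe_prodEquivOfIsCompl']
    case refine_1 =>
      set g : (Fin n → R) ≃ₗ[R] (Fin n → R) := E.symm.trans ((a.prodCongr c).trans E) with hgdef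
      have hgMp : ∀ x : Mplus, g ↑x = ↑(a x) := by
        intro x
        rw [hgdef]
        simp only [LinearEquiv.trans_apply]
        rw [hE, Submodule.prodEquivOfIsCompl_symm_apply_left, LinearEquiv.prodCongr_apply]
        simp [Submodule.coe_prodEquivOfIsCompl']
      have hgW : ∀ w : W, g ↑w = ↑(c w) := by
        intro w
        rw [hgdef]
        simp only [LinearEquiv.trans_apply]
        rw [hE, Submodule.prodEquivOfIsCompl_symm_apply_right, LinearEquiv.prodCongr_apply]
        simp [Submodule.coe_prodEquivOfIsCompl']
      have hcross : ∀ (x w : Fin n → R), x ∈ Mplus → w ∈ W →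
          x ⬝ᵥ (h *ᵥ w) = 0 ∧ w ⬝ᵥ (h *ᵥ x) = 0 := by
        intro x w hx hw
        have hpx : pm *ᵥ x = 0 := (memMp x).mp hx
        constructor
        · have e0 : h *ᵥ w = pm *ᵥ w + qm *ᵥ w := by rw [hsum, Matrix.add_mulVec]
          rw [e0, dotProduct_add, horthp x w hpx, horthq x w hx hw, add_zero]
        · have e0 : h *ᵥ x = pm *ᵥ x + qm *ᵥ x := by rw [hsum, Matrix.add_mulVec]
          rw [e0, hpx, dotProduct_add, dotProduct_zero, zero_add, hqsymm]
          exact horthq x w hx hw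
      have hqq : ∀ (x x' : Fin n → R), x' ∈ Mplus → x ⬝ᵥ (h *ᵥ x') = x ⬝ᵥ (qm *ᵥ x') := by
        intro x x' hx'
        rw [hsum, Matrix.add_mulVec, dotProduct_add, (memMp x').mp hx',
          dotProduct_zero, zero_add]
      have hww : ∀ (w w' : Fin n → R),
          w ⬝ᵥ (h *ᵥ w') = w ⬝ᵥ (pm *ᵥ w') + w ⬝ᵥ (qm *ᵥ w') := by
        intro w w'
        rw [hsum, Matrix.add_mulVec, dotProduct_add]
      have expand : ∀ (x w x' w' : Fin n → R), x ∈ Mplus → w ∈ W → x' ∈ Mplus → w' ∈ W →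
          (x + w) ⬝ᵥ (h *ᵥ (x' + w')) =
          x ⬝ᵥ (qm *ᵥ x') + (w ⬝ᵥ (pm *ᵥ w') + w ⬝ᵥ (qm *ᵥ w')) := by
        intro x w x' w' hx hw hx' hw'
        have t1 : x ⬝ᵥ (h *ᵥ x') = x ⬝ᵥ (qm *ᵥ x') := hqq x x' hx'
        have t2 : w ⬝ᵥ (h *ᵥ x') = 0 := (hcross x' w hx' hw).2
        have t3 : x ⬝ᵥ (h *ᵥ w') = 0 := (hcross x w' hx hw').1
        have t4 : w ⬝ᵥ (h *ᵥ w') = w ⬝ᵥ (pm *ᵥ w') + w ⬝ᵥ (qm *ᵥ w') := hww w w'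
        rw [Matrix.mulVec_add, dotProduct_add, add_dotProduct,
          add_dotProduct, t1, t2, t3, t4]
        ring
      have ha' : ∀ X Y : Mplus, ((a X : Fin n → R)) ⬝ᵥ (qm *ᵥ ↑(a Y)) =
          (X : Fin n → R) ⬝ᵥ (qm *ᵥ ↑Y) := by
        intro X Y
        have h1 := ha X Y
        rwa [Matrix.toLinearMap₂'_apply', Matrix.toLinearMap₂'_apply'] at h1
      have hc' : ∀ X Y : W, ((c X : Fin n → R)) ⬝ᵥ (pm *ᵥ ↑(c Y)) =
          (X : Fin n → R) ⬝ᵥ (pm *ᵥ ↑Y) := by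
        intro X Y
        have h1 := hc X Y
        rwa [Matrix.toLinearMap₂'_apply', Matrix.toLinearMap₂'_apply'] at h1
      have hcq' : ∀ X Y : W, ((c X : Fin n → R)) ⬝ᵥ (qm *ᵥ ↑(c Y)) =
          (X : Fin n → R) ⬝ᵥ (qm *ᵥ ↑Y) := by
        intro X Y
        have h1 := hcq X Y
        rwa [Matrix.toLinearMap₂'_apply', Matrix.toLinearMap₂'_apply'] at h1
      intro v v'
      obtain ⟨x, hx, w, hw, hv⟩ := hsuptop v
      obtain ⟨x', hx', w', hw', hv'⟩ := hsuptop v'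
      rw [Matrix.toLinearMap₂'_apply', Matrix.toLinearMap₂'_apply']
      have hgv : g v = ↑(a ⟨x, hx⟩) + ↑(c ⟨w, hw⟩) := by
        rw [hv, map_add, hgMp ⟨x, hx⟩, hgW ⟨w, hw⟩]
      have hgv' : g v' = ↑(a ⟨x', hx'⟩) + ↑(c ⟨w', hw'⟩) := by
        rw [hv', map_add, hgMp ⟨x', hx'⟩, hgW ⟨w', hw'⟩]
      rw [hgv, hgv', hv, hv',
        expand _ _ _ _ (a ⟨x, hx⟩).2 (c ⟨w, hw⟩).2 (a ⟨x', hx'⟩).2 (c ⟨w', hw'⟩).2,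
        expand _ _ _ _ hx hw hx' hw',
        ha' ⟨x, hx⟩ ⟨x', hx'⟩, hc' ⟨w, hw⟩ ⟨w', hw'⟩, hcq' ⟨w, hw⟩ ⟨w', hw'⟩]
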